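/- As formal power series in w: prod_{d >= 1} (1 - w^d)^{-N-bar(d,q)} = (1 + w)/(1 - qw), where N-bar(d,q) is the number of U-irreducible polynomials of degree d. -/

import Mathlib

/-- The map `F̃ : a ↦ a^{-q}` on the multiplicative group of the algebraic closure of
`F = 𝔽_q`. -/
noncomputable def Ftilde (F : Type) [Field F] (q : ℕ) :
    (AlgebraicClosure F)ˣ → (AlgebraicClosure F)ˣ :=
  fun a => (a ^ q)⁻¹

/-- `N̄(d,q)`: the number of U-irreducible polynomials of degree `d`, i.e. the number of
orbits of size `d` of the map `a ↦ a^{-q}` on the multiplicative group of the algebraic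
closure of `𝔽_q`: the number of points of exact period `d`, divided by `d`. -/
noncomputable def Nbar (F : Type) [Field F] (q d : ℕ) : ℕ :=
  Nat.card {a : (AlgebraicClosure F)ˣ //
    (Ftilde F q)^[d] a = a ∧ ∀ m, 0 < m → m < d → (Ftilde F q)^[m] a ≠ a} / d

open Function Real

/-- `q^m - (-1)^m` as a natural number. -/
def ccc (q m : ℕ) : ℕ := if Even m then q ^ m - 1 else q ^ m + 1

lemma ccc_pos {q : ℕ} (hq : 2 ≤ q) {m : ℕ} (hm : 0 < m) : 0 < ccc q m := by
  unfold ccc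
  split
  · have h1 : q ^ 1 ≤ q ^ m := Nat.pow_le_pow_right (by omega) hm
    simp only [pow_one] at h1
    omega
  · omega

lemma ccc_cast {q : ℕ} (hq : 1 ≤ q) (m : ℕ) : ((ccc q m : ℤ)) = (q : ℤ) ^ m - (-1) ^ m := by
  unfold ccc
  by_cases h : Even m
  · rw [if_pos h, h.neg_one_pow]
    have : 1 ≤ q ^ m := Nat.one_le_pow _ _ (by omega)
    push_cast [this]
    ring
  · rw [if_neg h, (Nat.odd_iff.2 (Nat.not_even_iff.1 h)).neg_one_pow]
    push_cast
    ring

lemma ftilde_iterate (F : Type) [Field F] (q : ℕ) (m : ℕ) (a : (AlgebraicClosure F)ˣ) :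
    (Ftilde F q)^[m] a = a ^ ((-(q : ℤ)) ^ m) := by
  induction m with
  | zero => simp
  | succ n ih =>
    rw [iterate_succ_apply', ih]
    show ((a ^ (-(q:ℤ)) ^ n) ^ q)⁻¹ = _
    rw [← zpow_natCast (a ^ (-(q:ℤ)) ^ n) q, ← zpow_mul, ← zpow_neg, pow_succ]
    congr 1
    ring

lemma ftilde_fixed_iff {F : Type} [Field F] {q m : ℕ} (hq : 1 ≤ q) (hm : 0 < m)
    (a : (AlgebraicClosure F)ˣ) :
    (Ftilde F q)^[m] a = a ↔ a ^ (ccc q m) = 1 := by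
  rw [ftilde_iterate]
  have h1 : a ^ ((-(q:ℤ)) ^ m) = a ↔ a ^ ((-(q:ℤ)) ^ m - 1) = 1 := by
    rw [zpow_sub, zpow_one]
    exact mul_inv_eq_one.symm
  rw [h1, ← zpow_natCast a (ccc q m)]
  by_cases h : Even m
  · have : (-(q:ℤ)) ^ m - 1 = (ccc q m : ℤ) := by
      rw [h.neg_pow, ccc_cast hq, h.neg_one_pow]
    rw [this]
  · have hodd : Odd m := Nat.odd_iff.2 (Nat.not_even_iff.1 h)
    have : (-(q:ℤ)) ^ m - 1 = -(ccc q m : ℤ) := by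
      rw [hodd.neg_pow, ccc_cast hq, hodd.neg_one_pow]
      ring
    rw [this, zpow_neg, inv_eq_one]

lemma card_pow_eq_one (F : Type) [Field F] [Fintype F] {q : ℕ} (hq : Fintype.card F = q)
    {m : ℕ} (hm : 0 < m) :
    Nat.card {a : (AlgebraicClosure F)ˣ // a ^ (ccc q m) = 1} = ccc q m := by
  set K := AlgebraicClosure F
  have hq2 : 2 ≤ q := hq ▸ Fintype.one_lt_card
  obtain ⟨n, hp, hcard⟩ := FiniteField.card F (ringChar F)
  haveI : CharP K (ringChar F) :=
    charP_of_injective_algebraMap (algebraMap F K).injective _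
  have hpq : ringChar F ∣ q := by
    rw [← hq, hcard]
    exact dvd_pow_self _ (by exact_mod_cast n.pos.ne')
  have hpqm : ringChar F ∣ q ^ m := dvd_pow hpq hm.ne'
  have hndvd : ¬ (ringChar F ∣ ccc q m) := by
    intro hdvd
    have h1 : ringChar F ∣ 1 := by
      unfold ccc at hdvd
      by_cases h : Even m
      · rw [if_pos h] at hdvd
        have hge : 1 ≤ q ^ m := Nat.one_le_pow _ _ (by omega)
        have := Nat.dvd_sub hpqm hdvd
        rwa [Nat.sub_sub_self hge] at this
      · rw [if_neg h] at hdvd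
        have := Nat.dvd_sub hdvd hpqm
        simpa using this
    exact hp.one_lt.ne' (Nat.dvd_one.mp h1)
  haveI : NeZero ((ccc q m : K)) := ⟨by
    rw [Ne, CharP.cast_eq_zero_iff K (ringChar F)]; exact hndvd⟩
  haveI : NeZero (ccc q m) := ⟨(ccc_pos hq2 hm).ne'⟩
  obtain ⟨ζ, hζ⟩ := HasEnoughRootsOfUnity.exists_primitiveRoot K (ccc q m)
  have hcardroots := hζ.card_rootsOfUnity
  have heq : Nat.card {a : Kˣ // a ^ (ccc q m) = 1} =
      Nat.card (rootsOfUnity (ccc q m) K) := by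
    exact Nat.card_congr (Equiv.subtypeEquivRight (fun x => (mem_rootsOfUnity _ _).symm))
  rw [heq, hcardroots]

lemma pred_iff_minimalPeriod {α : Type*} (f : α → α) {d : ℕ} (hd : 0 < d) (a : α) :
    (f^[d] a = a ∧ ∀ m, 0 < m → m < d → f^[m] a ≠ a) ↔ minimalPeriod f a = d := by
  constructor
  · rintro ⟨h1, h2⟩
    have hp : IsPeriodicPt f d a := h1
    have hdvd := hp.minimalPeriod_dvd
    have hpos : 0 < minimalPeriod f a := hp.minimalPeriod_pos hd
    rcases (Nat.le_of_dvd hd hdvd).lt_or_eq with hlt | heq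
    · exact absurd (iterate_minimalPeriod) (h2 _ hpos hlt)
    · exact heq
  · rintro rfl
    exact ⟨iterate_minimalPeriod, fun m hm hmd h =>
      not_isPeriodicPt_of_pos_of_lt_minimalPeriod hm.ne' hmd h⟩

lemma dvd_card_minimalPeriod {α : Type*} (f : α → α) {d : ℕ} (hd : 0 < d)
    [Finite {a : α // minimalPeriod f a = d}] :
    d ∣ Nat.card {a : α // minimalPeriod f a = d} := by
  classical
  set P := {a : α // minimalPeriod f a = d} with hP
  have hper : ∀ a : P, a.1 ∈ periodicPts f := fun a =>
    minimalPeriod_pos_iff_mem_periodicPts.mp (by rw [a.2]; exact hd)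
  have hpp : ∀ a : P, IsPeriodicPt f d a.1 := fun a => by
    have := isPeriodicPt_minimalPeriod f a.1
    rwa [a.2] at this
  -- the orbit equivalence relation
  let r : P → P → Prop := fun a b => ∃ i : ℕ, f^[i] a.1 = b.1
  have hsymm : ∀ {a b}, r a b → r b a := by
    rintro a b ⟨i, hi⟩
    refine ⟨d * (i + 1) - i, ?_⟩
    have h1 : d * (i + 1) - i + i = d * (i + 1) := by
      have : i ≤ d * (i + 1) := by nlinarith
      omega
    have h2 : f^[d * (i + 1)] a.1 = a.1 := (hpp a).mul_const (i + 1)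
    rw [← hi, ← iterate_add_apply, h1, h2]
  let s : Setoid P := ⟨r, ⟨fun a => ⟨0, rfl⟩, hsymm, by
    rintro a b c ⟨i, hi⟩ ⟨j, hj⟩
    exact ⟨j + i, by rw [iterate_add_apply, hi, hj]⟩⟩⟩
  haveI : Fintype P := Fintype.ofFinite P
  haveI : Fintype (Quotient s) := Quotient.fintype s
  have key : ∀ t : Quotient s, Nat.card {b : P // Quotient.mk s b = t} = d := by
    intro t
    obtain ⟨a, ha⟩ := Quotient.exists_rep t
    have hmpa : minimalPeriod f a.1 = d := a.2
    have φprop : ∀ i : Fin d, minimalPeriod f (f^[i.1] a.1) = d := fun i =>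
      (minimalPeriod_apply_iterate (hper a) i.1).trans hmpa
    let φ : Fin d → {b : P // Quotient.mk s b = t} := fun i =>
      ⟨⟨f^[i.1] a.1, φprop i⟩, by
        rw [← ha]
        exact Quotient.sound (hsymm ⟨i.1, rfl⟩)⟩
    have hbij : Function.Bijective φ := by
      constructor
      · intro i j hij
        have h1 : f^[i.1] a.1 = f^[j.1] a.1 := by
          have := congrArg (fun x => x.1.1) hij
          simpa [φ] using this
        have := iterate_injOn_Iio_minimalPeriod (f := f) (x := a.1)
          (by rw [hmpa]; exact Set.mem_Iio.2 i.2) (by rw [hmpa]; exact Set.mem_Iio.2 j.2) h1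
        exact Fin.ext this
      · rintro ⟨b, hb⟩
        have : s.r a b := Quotient.exact (ha.trans hb.symm)
        obtain ⟨j, hj⟩ := this
        refine ⟨⟨j % d, Nat.mod_lt _ hd⟩, ?_⟩
        have h2 : f^[j % d] a.1 = b.1 := by
          have h3 := iterate_mod_minimalPeriod_eq (f := f) (x := a.1) (n := j)
          rw [hmpa] at h3
          exact h3.trans hj
        exact Subtype.ext (Subtype.ext h2)
    have := Nat.card_congr (Equiv.ofBijective φ hbij)
    rw [← this, Nat.card_eq_fintype_card, Fintype.card_fin]
  have hsum : Nat.card P = ∑ t : Quotient s, Nat.card {b : P // Quotient.mk s b = t} := by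
    rw [← Nat.card_congr (Equiv.sigmaFiberEquiv (Quotient.mk s))]
    rw [Nat.card_eq_fintype_card, Fintype.card_sigma]
    simp [Nat.card_eq_fintype_card]
  rw [hsum]
  simp only [key]
  exact ⟨Fintype.card (Quotient s), by rw [Finset.sum_const, Finset.card_univ]; ring⟩

lemma card_fixed_eq_sum {α : Type*} (f : α → α) {n : ℕ} (hn : 0 < n)
    [Finite {a : α // f^[n] a = a}] :
    Nat.card {a : α // f^[n] a = a} =
      ∑ d ∈ n.divisors, Nat.card {a : α // minimalPeriod f a = d} := by
  classical
  set S := {a : α // f^[n] a = a} with hS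
  haveI : Fintype S := Fintype.ofFinite S
  have hperiod : ∀ (d : ℕ), d ∈ n.divisors → ∀ a : α, minimalPeriod f a = d → f^[n] a = a := by
    intro d hd a ha
    have hdvd : minimalPeriod f a ∣ n := ha ▸ (Nat.mem_divisors.mp hd).1
    exact isPeriodicPt_iff_minimalPeriod_dvd.mpr hdvd
  -- equivalence with sigma type
  let e : S ≃ Σ d : n.divisors, {a : α // minimalPeriod f a = d.1} :=
    { toFun := fun a => ⟨⟨minimalPeriod f a.1, Nat.mem_divisors.mpr
        ⟨IsPeriodicPt.minimalPeriod_dvd a.2, hn.ne'⟩⟩, ⟨a.1, rfl⟩⟩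
      invFun := fun x => ⟨x.2.1, hperiod x.1.1 x.1.2 x.2.1 x.2.2⟩
      left_inv := fun a => rfl
      right_inv := by
        rintro ⟨⟨d, hd⟩, ⟨a, ha⟩⟩
        have ha' : minimalPeriod f a = d := ha
        subst ha'
        rfl }
  haveI : ∀ d : n.divisors, Finite {a : α // minimalPeriod f a = d.1} := by
    intro d
    refine Finite.of_injective
      (fun b => (⟨b.1, hperiod d.1 d.2 b.1 b.2⟩ : S)) ?_
    intro x y hxy
    simp only [Subtype.mk.injEq] at hxy
    exact Subtype.ext hxy
  haveI : ∀ d : n.divisors, Fintype {a : α // minimalPeriod f a = d.1} := fun d =>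
    Fintype.ofFinite _
  rw [Nat.card_congr e, Nat.card_eq_fintype_card, Fintype.card_sigma]
  rw [← Finset.sum_coe_sort n.divisors (fun d => Nat.card {a : α // minimalPeriod f a = d})]
  congr 1
  ext d
  rw [Nat.card_eq_fintype_card]

lemma ftilde_fixed_finite (F : Type) [Field F] [Fintype F] {q : ℕ} (hq : Fintype.card F = q)
    {m : ℕ} (hm : 0 < m) : Finite {a : (AlgebraicClosure F)ˣ // (Ftilde F q)^[m] a = a} := by
  have hq2 : 2 ≤ q := hq ▸ Fintype.one_lt_card
  have hq1 : 1 ≤ q := by omega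
  haveI : NeZero (ccc q m) := ⟨(ccc_pos hq2 hm).ne'⟩
  have e1 := Equiv.subtypeEquivRight (fun a => ftilde_fixed_iff (F := F) hq1 hm a)
  have e2 := Equiv.subtypeEquivRight
    (fun x : (AlgebraicClosure F)ˣ => (mem_rootsOfUnity (ccc q m) x).symm)
  haveI : Finite (rootsOfUnity (ccc q m) (AlgebraicClosure F)) := inferInstance
  exact Finite.of_equiv _ (e1.trans e2).symm

lemma minper_finite (F : Type) [Field F] [Fintype F] {q : ℕ} (hq : Fintype.card F = q)
    {d : ℕ} (hd : 0 < d) :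
    Finite {a : (AlgebraicClosure F)ˣ // minimalPeriod (Ftilde F q) a = d} := by
  haveI := ftilde_fixed_finite F hq hd
  refine Finite.of_injective (fun b =>
    (⟨b.1, isPeriodicPt_iff_minimalPeriod_dvd.mpr (by rw [b.2])⟩ :
      {a : (AlgebraicClosure F)ˣ // (Ftilde F q)^[d] a = a})) ?_
  intro x y hxy
  simp only [Subtype.mk.injEq] at hxy
  exact Subtype.ext (congrArg (fun z : {a : (AlgebraicClosure F)ˣ // (Ftilde F q)^[d] a = a} => z.1) hxy)

lemma sum_divisors_nbar (F : Type) [Field F] [Fintype F] {q : ℕ} (hq : Fintype.card F = q)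
    {n : ℕ} (hn : 0 < n) :
    ∑ d ∈ n.divisors, d * Nbar F q d = ccc q n := by
  have hq2 : 2 ≤ q := hq ▸ Fintype.one_lt_card
  have hq1 : 1 ≤ q := by omega
  haveI := ftilde_fixed_finite F hq hn
  have hfixcard : Nat.card {a : (AlgebraicClosure F)ˣ // (Ftilde F q)^[n] a = a} = ccc q n := by
    rw [Nat.card_congr (Equiv.subtypeEquivRight (fun a => ftilde_fixed_iff (F := F) hq1 hn a))]
    exact card_pow_eq_one F hq hn
  rw [← hfixcard, card_fixed_eq_sum (Ftilde F q) hn]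
  refine Finset.sum_congr rfl (fun d hd => ?_)
  have hdpos : 0 < d := Nat.pos_of_mem_divisors hd
  haveI := minper_finite F hq hdpos
  have hcongr : Nat.card {a : (AlgebraicClosure F)ˣ //
      (Ftilde F q)^[d] a = a ∧ ∀ m, 0 < m → m < d → (Ftilde F q)^[m] a ≠ a} =
      Nat.card {a : (AlgebraicClosure F)ˣ // minimalPeriod (Ftilde F q) a = d} :=
    Nat.card_congr (Equiv.subtypeEquivRight
      (fun a => pred_iff_minimalPeriod (Ftilde F q) hdpos a))
  rw [Nbar, hcongr, Nat.mul_div_cancel' (dvd_card_minimalPeriod _ hdpos)]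


set_option maxHeartbeats 2000000 in
/-- The identity `∏_{d ≥ 1} (1 - w^d)^{-N̄(d,q)} = (1 + w)/(1 - qw)`, stated as a
convergent identity of real numbers for `q·|w| < 1` (which determines the underlying
formal power series identity in `w`). -/
theorem prod_Nbar (F : Type) [Field F] [Fintype F] (q : ℕ)
    (hq : Fintype.card F = q) (w : ℝ) (hw : (q : ℝ) * |w| < 1) :
    ∏' d : ℕ, (1 - w ^ (d + 1)) ^ (-(Nbar F q (d + 1) : ℤ)) =
      (1 + w) / (1 - q * w) := by
  classical
  have hq2 : 2 ≤ q := hq ▸ Fintype.one_lt_card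
  have hq1 : 1 ≤ q := by omega
  set r : ℝ := (q : ℝ) * |w| with hr
  have hr0 : 0 ≤ r := mul_nonneg (Nat.cast_nonneg q) (abs_nonneg w)
  have hw2 : |w| < 1 / 2 := by
    have h2q : (2 : ℝ) ≤ (q : ℝ) := by exact_mod_cast hq2
    nlinarith [abs_nonneg w]
  have hwlt1 : |w| < 1 := by linarith
  have hw0 : 0 ≤ |w| := abs_nonneg w
  -- the central combinatorial identity
  have hkey : ∀ n : ℕ, 0 < n → ∑ d ∈ n.divisors, d * Nbar F q d = ccc q n :=
    fun n hn => sum_divisors_nbar F hq hn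
  have hccc_le : ∀ m : ℕ, ccc q m ≤ 2 * q ^ m := by
    intro m
    have h1 : 1 ≤ q ^ m := Nat.one_le_pow _ _ (by omega)
    unfold ccc; split <;> omega
  have hbound : ∀ d : ℕ, 0 < d → d * Nbar F q d ≤ 2 * q ^ d := by
    intro d hd
    refine le_trans ?_ (hccc_le d)
    rw [← hkey d hd]
    exact Finset.single_le_sum (f := fun i => i * Nbar F q i)
      (fun i _ => Nat.zero_le _) (Nat.mem_divisors_self d hd.ne')
  -- positivity of factors
  have habsw : ∀ d : ℕ, |w ^ (d + 1)| ≤ |w| := by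
    intro d
    rw [abs_pow]
    exact pow_le_of_le_one hw0 hwlt1.le (Nat.succ_ne_zero d)
  have hpos : ∀ d : ℕ, 0 < 1 - w ^ (d + 1) := by
    intro d
    have h1 : w ^ (d + 1) ≤ |w ^ (d + 1)| := le_abs_self _
    have := habsw d
    linarith
  set t : ℕ → ℝ := fun d => (1 - w ^ (d + 1)) ^ (-(Nbar F q (d + 1) : ℤ)) with ht
  have htpos : ∀ d, 0 < t d := fun d => zpow_pos (hpos d) _
  have hlog : ∀ d, Real.log (t d) =
      (Nbar F q (d + 1) : ℝ) * -Real.log (1 - w ^ (d + 1)) := by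
    intro d
    rw [ht]
    simp only []
    rw [Real.log_zpow]
    push_cast
    ring
  -- |log (1 - x)| ≤ 2|x| for |x| ≤ 1/2
  have hlogbound : ∀ x : ℝ, |x| ≤ 1 / 2 → |Real.log (1 - x)| ≤ 2 * |x| := by
    intro x hx
    have hx1 : |x| < 1 := by linarith
    have h := Real.abs_log_sub_add_sum_range_le hx1 0
    simp only [Finset.range_zero, Finset.sum_empty, zero_add, pow_one] at h
    have h2 : (0:ℝ) < 1 - |x| := by linarith
    have h3 : |x| / (1 - |x|) ≤ 2 * |x| := by
      rw [div_le_iff₀ h2]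
      nlinarith [abs_nonneg x]
    linarith
  -- summability of logs
  have hNle : ∀ d : ℕ, (Nbar F q (d + 1) : ℝ) ≤ 2 * (q : ℝ) ^ (d + 1) := by
    intro d
    have h1 : Nbar F q (d + 1) ≤ (d + 1) * Nbar F q (d + 1) :=
      Nat.le_mul_of_pos_left _ (Nat.succ_pos d)
    have h2 := hbound (d + 1) (Nat.succ_pos d)
    exact_mod_cast le_trans h1 h2
  have hlogb : ∀ d : ℕ, ‖Real.log (t d)‖ ≤ 4 * r ^ d := by
    intro d
    rw [Real.norm_eq_abs, hlog d, abs_mul, abs_neg, Nat.abs_cast]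
    have h1 : |Real.log (1 - w ^ (d + 1))| ≤ 2 * |w ^ (d + 1)| :=
      hlogbound _ (le_trans (habsw d) hw2.le)
    have h2 : (Nbar F q (d + 1) : ℝ) * |Real.log (1 - w ^ (d + 1))| ≤
        (2 * (q : ℝ) ^ (d + 1)) * (2 * |w ^ (d + 1)|) := by
      apply mul_le_mul (hNle d) h1 (abs_nonneg _)
      positivity
    refine le_trans h2 ?_
    rw [abs_pow]
    have h3 : (q : ℝ) ^ (d + 1) * |w| ^ (d + 1) = r ^ (d + 1) := by
      rw [hr, mul_pow]
    have h4 : r ^ (d + 1) ≤ r ^ d := by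
      rw [pow_succ]
      nlinarith [pow_nonneg hr0 d]
    nlinarith [pow_nonneg hr0 d, pow_nonneg hr0 (d+1),
      mul_nonneg (pow_nonneg (Nat.cast_nonneg q : (0:ℝ) ≤ q) (d+1)) (pow_nonneg hw0 (d+1))]
  have hsumlog : Summable (fun d => Real.log (t d)) :=
    Summable.of_norm_bounded ((summable_geometric_of_lt_one hr0 hw).mul_left 4) hlogb
  -- product = exp of sum
  have hprod : ∏' d : ℕ, t d = Real.exp (∑' d, Real.log (t d)) := by
    have := Real.rexp_tsum_eq_tprod (f := t) htpos hsumlog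
    exact this.symm
  rw [ht] at hprod
  rw [hprod]
  -- the double-sum function
  set g : ℕ × ℕ → ℝ := fun p =>
    (((p.1 + 1) * Nbar F q (p.1 + 1) : ℕ) : ℝ) * w ^ ((p.1 + 1) * (p.2 + 1)) /
      (((p.1 + 1) * (p.2 + 1) : ℕ) : ℝ) with hg
  -- summability of g
  have hgb : ∀ p : ℕ × ℕ, ‖g p‖ ≤ (2 * r ^ p.1) * |w| ^ p.2 := by
    rintro ⟨d, k⟩
    have hE1 : (1 : ℝ) ≤ (((d + 1) * (k + 1) : ℕ) : ℝ) := by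
      have : 1 ≤ (d + 1) * (k + 1) := Nat.one_le_iff_ne_zero.mpr (by positivity)
      exact_mod_cast this
    have hA : (((d + 1) * Nbar F q (d + 1) : ℕ) : ℝ) ≤ 2 * (q : ℝ) ^ (d + 1) := by
      exact_mod_cast hbound (d + 1) (Nat.succ_pos d)
    have hA0 : (0:ℝ) ≤ (((d + 1) * Nbar F q (d + 1) : ℕ) : ℝ) := Nat.cast_nonneg _
    have h1 : ‖g (d, k)‖ ≤ (((d + 1) * Nbar F q (d + 1) : ℕ) : ℝ) *
        |w| ^ ((d + 1) * (k + 1)) := by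
      rw [hg]
      simp only [norm_div, norm_mul, Real.norm_eq_abs, Nat.abs_cast, abs_pow]
      exact div_le_self (by positivity) hE1
    refine le_trans h1 ?_
    have hsplit : |w| ^ ((d + 1) * (k + 1)) = |w| ^ (d + 1) * |w| ^ ((d + 1) * k) := by
      rw [← pow_add]
      congr 1
      ring
    have hwk : |w| ^ ((d + 1) * k) ≤ |w| ^ k :=
      pow_le_pow_of_le_one hw0 hwlt1.le (Nat.le_mul_of_pos_left k (Nat.succ_pos d))
    have hrd : r ^ (d + 1) ≤ r ^ d := by
      rw [pow_succ]; nlinarith [pow_nonneg hr0 d]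
    calc (((d + 1) * Nbar F q (d + 1) : ℕ) : ℝ) * |w| ^ ((d + 1) * (k + 1))
        ≤ (2 * (q : ℝ) ^ (d + 1)) * (|w| ^ (d + 1) * |w| ^ ((d + 1) * k)) := by
          rw [← hsplit]
          exact mul_le_mul_of_nonneg_right hA (pow_nonneg hw0 _)
      _ = (2 * r ^ (d + 1)) * |w| ^ ((d + 1) * k) := by
          rw [hr, mul_pow]; ring
      _ ≤ (2 * r ^ d) * |w| ^ k := by
          apply mul_le_mul (by nlinarith) hwk (pow_nonneg hw0 _) (by positivity)
  have hgsum : Summable g := by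
    refine Summable.of_norm_bounded ?_ hgb
    exact ((summable_geometric_of_lt_one hr0 hw).mul_left 2).mul_of_nonneg
      (summable_geometric_of_lt_one hw0 hwlt1)
      (fun d => by positivity) (fun k => by positivity)
  -- rows sum to log (t d)
  have hrow : ∀ d : ℕ, HasSum (fun k => g (d, k)) (Real.log (t d)) := by
    intro d
    have h0 := hasSum_pow_div_log_of_abs_lt_one
      (x := w ^ (d + 1)) (lt_of_le_of_lt (habsw d) hwlt1)
    have h1 := h0.mul_left ((Nbar F q (d + 1) : ℝ))
    have heq : (fun k : ℕ => (Nbar F q (d + 1) : ℝ) * ((w ^ (d + 1)) ^ (k + 1) / ((k : ℝ) + 1))) =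
        (fun k => g (d, k)) := by
      funext k
      rw [hg]
      simp only []
      rw [← pow_mul]
      have hd1 : ((d : ℝ) + 1) ≠ 0 := by positivity
      push_cast
      field_simp
    rw [heq] at h1
    have hval : (Nbar F q (d + 1) : ℝ) * -Real.log (1 - w ^ (d + 1)) = Real.log (t d) :=
      (hlog d).symm
    rw [← hval]
    exact h1
  -- LHS sum equals total sum of g
  have hLHS : ∑' d, Real.log (t d) = ∑' p, g p := by
    rw [Summable.tsum_prod' hgsum (fun b => (hrow b).summable)]
    exact tsum_congr (fun d => ((hrow d).tsum_eq).symm)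
  -- fiberwise: HasSum H (tsum g) where H n = ccc q n * w^n / n
  set H : ℕ → ℝ := fun n => (ccc q n : ℝ) * w ^ n / n with hH
  have hfib := hgsum.hasSum.tsum_fiberwise (fun p : ℕ × ℕ => (p.1 + 1) * (p.2 + 1))
  have hfibH : (fun n : ℕ =>
      ∑' b : ((fun p : ℕ × ℕ => (p.1 + 1) * (p.2 + 1)) ⁻¹' {n}), g b) = H := by
    funext n
    match n with
    | 0 =>
      haveI : IsEmpty (((fun p : ℕ × ℕ => (p.1 + 1) * (p.2 + 1)) ⁻¹' {0}) : Set (ℕ × ℕ)) := by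
        constructor
        rintro ⟨⟨a, b⟩, hp⟩
        simp only [Set.mem_preimage, Set.mem_singleton_iff] at hp
        rcases Nat.mul_eq_zero.mp hp with h | h <;> omega
      rw [tsum_empty]
      simp [hH, ccc]
    | Nat.succ m =>
      have hne : ∀ y : ℕ × ℕ, y ∈ (m + 1).divisorsAntidiagonal → 1 ≤ y.1 ∧ 1 ≤ y.2 := by
        intro y hy
        have h := Nat.mem_divisorsAntidiagonal.mp hy
        constructor <;> by_contra hc <;> push_neg at hc <;>
          [(have : y.1 = 0 := by omega); (have : y.2 = 0 := by omega)] <;>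
          rw [this] at h <;> simp at h
      let E : ((fun p : ℕ × ℕ => (p.1 + 1) * (p.2 + 1)) ⁻¹' {m + 1} : Set (ℕ × ℕ)) ≃
          {p : ℕ × ℕ // p ∈ (m + 1).divisorsAntidiagonal} :=
        { toFun := fun x => ⟨(x.1.1 + 1, x.1.2 + 1), by
            rw [Nat.mem_divisorsAntidiagonal]
            refine ⟨?_, Nat.succ_ne_zero m⟩
            exact x.2⟩
          invFun := fun y => ⟨(y.1.1 - 1, y.1.2 - 1), by
            obtain ⟨h1, h2⟩ := hne y.1 y.2
            have hy := (Nat.mem_divisorsAntidiagonal.mp y.2).1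
            simp only [Set.mem_preimage, Set.mem_singleton_iff]
            have e1 : y.1.1 - 1 + 1 = y.1.1 := by omega
            have e2 : y.1.2 - 1 + 1 = y.1.2 := by omega
            rw [e1, e2]
            exact hy⟩
          left_inv := fun x => Subtype.ext (by simp)
          right_inv := fun y => by
            obtain ⟨h1, h2⟩ := hne y.1 y.2
            apply Subtype.ext
            have e1 : y.1.1 - 1 + 1 = y.1.1 := by omega
            have e2 : y.1.2 - 1 + 1 = y.1.2 := by omega
            show (y.1.1 - 1 + 1, y.1.2 - 1 + 1) = y.1
            rw [e1, e2] }
      have hts : (∑' b : ((fun p : ℕ × ℕ => (p.1 + 1) * (p.2 + 1)) ⁻¹' {m + 1}), g b)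
          = ∑ p ∈ (m + 1).divisorsAntidiagonal, g (p.1 - 1, p.2 - 1) := by
        rw [← Equiv.tsum_eq E.symm (fun x => g x.1)]
        have : ∀ y : {p : ℕ × ℕ // p ∈ (m + 1).divisorsAntidiagonal},
            g ((E.symm y).1) = g (y.1.1 - 1, y.1.2 - 1) := fun y => rfl
        rw [tsum_congr this]
        exact Finset.tsum_subtype _ (fun p : ℕ × ℕ => g (p.1 - 1, p.2 - 1))
      rw [hts]
      have hterm : ∀ p ∈ (m + 1).divisorsAntidiagonal, g (p.1 - 1, p.2 - 1) =
          ((p.1 * Nbar F q p.1 : ℕ) : ℝ) * (w ^ (m + 1) / (((m + 1 : ℕ) : ℝ))) := by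
        intro p hp
        obtain ⟨h1, h2⟩ := hne p hp
        have hy := (Nat.mem_divisorsAntidiagonal.mp hp).1
        have e1 : p.1 - 1 + 1 = p.1 := by omega
        have e2 : p.2 - 1 + 1 = p.2 := by omega
        rw [hg]
        simp only [e1, e2, hy]
        rw [mul_div_assoc]
      rw [Finset.sum_congr rfl hterm]
      rw [← Finset.sum_mul]
      have hcast : (∑ p ∈ (m + 1).divisorsAntidiagonal, ((p.1 * Nbar F q p.1 : ℕ) : ℝ))
          = ((ccc q (m + 1) : ℕ) : ℝ) := by
        rw [← Nat.cast_sum]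
        congr 1
        rw [Nat.sum_divisorsAntidiagonal (f := fun a b => a * Nbar F q a)]
        exact hkey (m + 1) (Nat.succ_pos m)
      rw [hcast]
      simp only [hH]
      exact (mul_div_assoc _ _ _).symm
  -- the explicit series for the right-hand side
  have h1mqw : (0:ℝ) < 1 - (q : ℝ) * w := by
    have hle : (q : ℝ) * w ≤ |(q : ℝ) * w| := le_abs_self _
    have habs : |(q : ℝ) * w| = (q : ℝ) * |w| := by rw [abs_mul, Nat.abs_cast]
    linarith
  have h1pw : (0:ℝ) < 1 + w := by
    have := neg_abs_le w
    linarith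
  have hqw1 : |(q : ℝ) * w| < 1 := by rw [abs_mul, Nat.abs_cast]; exact hw
  have hmw1 : |(-w)| < 1 := by rw [abs_neg]; exact hwlt1
  have hs1 := Real.hasSum_pow_div_log_of_abs_lt_one hqw1
  have hs2 := Real.hasSum_pow_div_log_of_abs_lt_one hmw1
  rw [sub_neg_eq_add] at hs2
  have hs3 := hs1.sub hs2
  have hphi : ∀ n : ℕ, H n = ((q : ℝ) * w) ^ n / n - (-w) ^ n / n := by
    intro n
    match n with
    | 0 => simp [hH, ccc]
    | Nat.succ m =>
      have hc := ccc_cast (q := q) hq1 (m + 1)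
      have hcR : ((ccc q (m + 1) : ℝ)) = (q : ℝ) ^ (m + 1) - (-1) ^ (m + 1) := by
        exact_mod_cast congrArg (fun z : ℤ => (z : ℝ)) hc
      rw [hH]
      simp only [hcR]
      have hm0 : ((m : ℝ) + 1) ≠ 0 := by positivity
      rw [mul_pow]
      push_cast
      field_simp
      simp only [Nat.succ_eq_add_one]
      ring
  have hs4 : HasSum (fun n => H (n + 1))
      (-Real.log (1 - (q : ℝ) * w) - -Real.log (1 + w)) := by
    have heq2 : (fun n : ℕ => ((q : ℝ) * w) ^ (n + 1) / ((n : ℝ) + 1) -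
        (-w) ^ (n + 1) / ((n : ℝ) + 1)) = fun n => H (n + 1) := by
      funext n
      rw [hphi (n + 1)]
      push_cast
      ring
    rw [heq2] at hs3
    exact hs3
  have hHsum : HasSum H (-Real.log (1 - (q : ℝ) * w) - -Real.log (1 + w)) := by
    have h5 := (hasSum_nat_add_iff (f := H) 1).mp hs4
    have hH0 : ∑ i ∈ Finset.range 1, H i = 0 := by
      simp [hH, ccc]
    rw [hH0, add_zero] at h5
    exact h5
  have hGH : HasSum H (∑' p, g p) := hfibH ▸ hfib
  have huniq : ∑' p, g p = -Real.log (1 - (q : ℝ) * w) - -Real.log (1 + w) :=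
    hGH.unique hHsum
  rw [hLHS, huniq]
  rw [show -Real.log (1 - (q : ℝ) * w) - -Real.log (1 + w)
      = Real.log (1 + w) - Real.log (1 - (q : ℝ) * w) by ring]
  rw [Real.exp_sub, Real.exp_log h1pw, Real.exp_log h1mqw]
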